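/- (Impossibility of weak consistency.) For every r ≥ 1, every ε ∈ (0,1), every measurable function h : ℝ → ℝ, and every sequence (θ̂_{r,n})_{n≥1} of measurable estimators θ̂_{r,n} : ℕ^n → ℝ, one has sup over all probability mass functions P on ℕ of limsup_{n→∞} P_P( ℓ(θ̂_{r,n}(X_n), θ_r(P;X_n)) > ε ) = 1. -/

import Mathlib

open MeasureTheory ProbabilityTheory Real Filter
open scoped ENNReal NNReal

noncomputable section

/-- The law of an i.i.d. sample of size `n` from the discrete distribution `P` on `ℕ`. -/
def sampleMeasure (P : PMF ℕ) (n : ℕ) : Measure (Fin n → ℕ) :=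
  Measure.pi fun _ => P.toMeasure

/-- The probability mass of symbol `j` under `P`, as a real number. -/
def pReal (P : PMF ℕ) (j : ℕ) : ℝ := (P j).toReal

/-- Empirical frequency of the symbol `j` in the sample `ω`. -/
def freq {n : ℕ} (ω : Fin n → ℕ) (j : ℕ) : ℕ :=
  (Finset.univ.filter fun i => ω i = j).card

/-- The `r`-order missing mass `θ_r(P; X_n)`. -/
def missingMass (p : ℕ → ℝ) (r : ℕ) {n : ℕ} (ω : Fin n → ℕ) : ℝ :=
  ∑' j, p j ^ r * (if freq ω j = 0 then 1 else 0)

/-- The multiplicative (relative) loss: `ℓ(t, θ) = |t/θ - 1|` if `θ > 0`, and `h t` otherwise. -/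
def mloss (h : ℝ → ℝ) (t θ : ℝ) : ℝ := if 0 < θ then |t / θ - 1| else h t

namespace MMI

lemma measSet {n : ℕ} (s : Set (Fin n → ℕ)) : MeasurableSet s :=
  (Set.to_countable s).measurableSet

instance (P : PMF ℕ) (n : ℕ) : IsProbabilityMeasure (sampleMeasure P n) := by
  unfold sampleMeasure; infer_instance

lemma sample_singleton (P : PMF ℕ) (n : ℕ) (x : Fin n → ℕ) :
    sampleMeasure P n {x} = ∏ i, P (x i) := by
  have hx : ({x} : Set (Fin n → ℕ)) = Set.univ.pi fun i => {x i} := by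
    ext y; simp [funext_iff, Set.mem_pi, eq_comm]
  rw [sampleMeasure, hx, Measure.pi_pi]
  exact Finset.prod_congr rfl fun i _ => P.toMeasure_apply_singleton _ (measurableSet_singleton _)

lemma sample_eq_tsum (P : PMF ℕ) (n : ℕ) (s : Set (Fin n → ℕ)) :
    sampleMeasure P n s = ∑' x : s, ∏ i, P ((x : Fin n → ℕ) i) := by
  have hs : s = ⋃ x : s, {(x : Fin n → ℕ)} := by simp
  conv_lhs => rw [hs]
  rw [measure_iUnion]
  · exact tsum_congr fun x => sample_singleton P n x
  · intro a b hab
    simp only [Function.onFun, Set.disjoint_singleton]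
    exact fun hc => hab (Subtype.ext hc)
  · exact fun _ => measurableSet_singleton _

lemma sample_mono_pmf {P Q : PMF ℕ} {n : ℕ} {s : Set (Fin n → ℕ)}
    (hs : ∀ ω ∈ s, ∀ i, P (ω i) ≤ Q (ω i)) :
    sampleMeasure P n s ≤ sampleMeasure Q n s := by
  rw [sample_eq_tsum, sample_eq_tsum]
  exact ENNReal.tsum_le_tsum fun x =>
    Finset.prod_le_prod' fun i _ => hs x x.2 i

lemma measure_seen_le (P : PMF ℕ) (n : ℕ) (j : ℕ) :
    sampleMeasure P n {ω | ∃ i, ω i = j} ≤ n * P j := by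
  have h1 : {ω : Fin n → ℕ | ∃ i, ω i = j} = ⋃ i : Fin n, {ω | ω i = j} := by
    ext ω; simp
  have h2 : ∀ i : Fin n, sampleMeasure P n {ω | ω i = j} = P j := by
    intro i
    have : {ω : Fin n → ℕ | ω i = j} = Set.univ.pi (Function.update (fun _ => (Set.univ : Set ℕ)) i ({j} : Set ℕ)) := by
      ext ω
      constructor
      · intro hω k _
        rcases eq_or_ne k i with rfl | hk
        · simpa [Function.update_self] using hω
        · simp [Function.update_of_ne hk]
      · intro hω
        have := hω i (Set.mem_univ i)
        simpa [Function.update_self] using this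
    rw [sampleMeasure, this, Measure.pi_pi]
    rw [Finset.prod_eq_single i]
    · simp [P.toMeasure_apply_singleton _ (measurableSet_singleton _)]
    · intro k _ hk; simp [Function.update_of_ne hk]
    · simp
  calc sampleMeasure P n {ω | ∃ i, ω i = j} ≤ ∑' i : Fin n, sampleMeasure P n {ω | ω i = j} := by
        rw [h1]; exact measure_iUnion_le _
    _ = ∑ i : Fin n, P j := by rw [tsum_fintype]; exact Finset.sum_congr rfl fun i _ => h2 i
    _ = n * P j := by simp [mul_comm]

lemma measure_unseen (P : PMF ℕ) (n : ℕ) (j : ℕ) :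
    sampleMeasure P n {ω | ∀ i, ω i ≠ j} = (1 - P j) ^ n := by
  have h1 : {ω : Fin n → ℕ | ∀ i, ω i ≠ j} = Set.univ.pi fun _ => ({j}ᶜ : Set ℕ) := by
    ext ω; simp [Set.mem_pi]
  rw [sampleMeasure, h1, Measure.pi_pi]
  have h2 : P.toMeasure ({j}ᶜ : Set ℕ) = 1 - P j := by
    rw [prob_compl_eq_one_sub (measurableSet_singleton _),
      P.toMeasure_apply_singleton _ (measurableSet_singleton _)]
  simp [h2]

lemma freq_eq_zero_iff {n : ℕ} (ω : Fin n → ℕ) (j : ℕ) :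
    freq ω j = 0 ↔ ∀ i, ω i ≠ j := by
  simp [freq, Finset.card_eq_zero, Finset.filter_eq_empty_iff]

lemma tsum_shift (f : ℕ → ℝ) (s : ℕ) :
    ∑' j, (if s ≤ j then f (j - s) else 0) = ∑' m, f m := by
  have hi : Function.Injective (fun m : ℕ => m + s) := add_left_injective s
  have hsupp : Function.support (fun j => if s ≤ j then f (j - s) else 0) ⊆
      Set.range (fun m : ℕ => m + s) := by
    intro j hj
    by_cases hsj : s ≤ j
    · exact ⟨j - s, by simp; omega⟩
    · simp [hsj] at hj
  have := hi.tsum_eq hsupp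
  rw [← this]
  apply tsum_congr; intro m; simp

lemma summable_shift {f : ℕ → ℝ} (s : ℕ) (hf : Summable f) :
    Summable (fun j => if s ≤ j then f (j - s) else 0) := by
  have hi : Function.Injective (fun m : ℕ => m + s) := add_left_injective s
  have h0 : ∀ x ∉ Set.range (fun m : ℕ => m + s),
      (if s ≤ x then f (x - s) else 0) = 0 := by
    intro x hx
    have : ¬ s ≤ x := fun hsx => hx ⟨x - s, by simp; omega⟩
    simp [this]
  rw [← hi.summable_iff h0]
  apply hf.congr; intro m; simp

lemma tsum_shift' (f : ℕ → ℝ≥0∞) (s : ℕ) :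
    ∑' j, (if s ≤ j then f (j - s) else 0) = ∑' m, f m := by
  have hi : Function.Injective (fun m : ℕ => m + s) := add_left_injective s
  have hsupp : Function.support (fun j => if s ≤ j then f (j - s) else 0) ⊆
      Set.range (fun m : ℕ => m + s) := by
    intro j hj
    by_cases hsj : s ≤ j
    · exact ⟨j - s, by simp; omega⟩
    · simp [hsj] at hj
  have := hi.tsum_eq hsupp
  rw [← this]
  apply tsum_congr; intro m; simp

end MMI

namespace MMI
section Construction

variable (r : ℕ) (ε δ : ℝ) (est : (n : ℕ) → (Fin n → ℕ) → ℝ)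

structure Good (r : ℕ) (ε δ : ℝ) : Prop where
  hd0 : 0 < δ
  hd2 : δ ≤ 1/2
  he0 : 0 < ε
  he1 : ε < 1
  hr : 1 ≤ r

def Bc : ℕ := ⌈4 / (1 - ε)⌉₊
def Mc : ℕ := max 1 ⌈1/δ⌉₊
def BM : ℝ := (Bc ε : ℝ) ^ (Mc δ)
def sg : ℝ := 1 / (2 * BM ε δ)

def Jset (v : ℝ) : Set ℝ := Set.Icc ((1 - ε) * v ^ r) (2 * (1 + ε) * v ^ r)

section Facts
variable (hG : Good r ε δ)
include hG

lemma heps1 : 0 < 1 - ε := by have := hG.he1; linarith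

lemma Bc_ge : 4 / (1 - ε) ≤ (Bc ε : ℝ) := Nat.le_ceil _

lemma Bc_ge_four : (4:ℝ) ≤ (Bc ε : ℝ) := by
  refine le_trans ?_ (Bc_ge r ε δ hG)
  rw [le_div_iff₀ (heps1 r ε δ hG)]
  nlinarith [hG.he0]

lemma Bc_ge_one : (1:ℝ) ≤ (Bc ε : ℝ) := by linarith [Bc_ge_four r ε δ hG]

lemma BM_ge_one : (1:ℝ) ≤ BM ε δ := one_le_pow₀ (Bc_ge_one r ε δ hG)

lemma BM_pos : (0:ℝ) < BM ε δ := lt_of_lt_of_le one_pos (BM_ge_one r ε δ hG)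

lemma sg_pos : 0 < sg ε δ := by
  have := BM_pos r ε δ hG; rw [sg]; positivity

lemma sg_le_half : sg ε δ ≤ 1/2 := by
  rw [sg, div_le_div_iff₀ (by linarith [BM_pos r ε δ hG]) two_pos]
  nlinarith [BM_ge_one r ε δ hG]

lemma sg_mul_BM : BM ε δ * sg ε δ = 1/2 := by
  have := BM_pos r ε δ hG
  rw [sg]; field_simp

omit hG in
lemma Mc_pos : 1 ≤ Mc δ := le_max_left _ _

omit hG in
lemma Mc_ge : 1 / δ ≤ (Mc δ : ℝ) := by
  refine le_trans (Nat.le_ceil _) ?_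
  exact_mod_cast Nat.cast_le.mpr (le_max_right 1 ⌈1/δ⌉₊)

/-- Separation of the target intervals. -/
lemma Jset_disjoint {g : ℝ} (hg : 0 < g) {i i' : ℕ} (hi : 1 ≤ i) (hii : i < i') :
    Disjoint (Jset r ε ((Bc ε : ℝ) ^ i * g)) (Jset r ε ((Bc ε : ℝ) ^ i' * g)) := by
  have hB1 : (1:ℝ) ≤ (Bc ε : ℝ) := Bc_ge_one r ε δ hG
  have hB0 : (0:ℝ) < (Bc ε : ℝ) := lt_of_lt_of_le one_pos hB1
  have hvr : 0 < ((Bc ε : ℝ) ^ i * g) ^ r := by positivity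
  set v := (Bc ε : ℝ) ^ i * g with hv
  have key : 2 * (1 + ε) * v ^ r < (1 - ε) * ((Bc ε : ℝ) ^ i' * g) ^ r := by
    have hsplit : ((Bc ε : ℝ) ^ i' * g) ^ r = ((Bc ε : ℝ) ^ (i' - i)) ^ r * v ^ r := by
      rw [hv, ← mul_pow, ← mul_assoc, ← pow_add, Nat.sub_add_cancel (le_of_lt hii)]
    rw [hsplit]
    have h1 : (Bc ε : ℝ) ≤ ((Bc ε : ℝ) ^ (i' - i)) ^ r := by
      calc (Bc ε : ℝ) = (Bc ε : ℝ) ^ 1 := (pow_one _).symm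
        _ ≤ (Bc ε : ℝ) ^ ((i' - i) * r) := by
            apply pow_le_pow_right₀ hB1
            have h2 : 1 ≤ i' - i := by omega
            calc 1 = 1 * 1 := (one_mul 1).symm
              _ ≤ (i' - i) * r := Nat.mul_le_mul h2 hG.hr
        _ = ((Bc ε : ℝ) ^ (i' - i)) ^ r := by rw [← pow_mul]
    have h4 : 4 ≤ (1 - ε) * (Bc ε : ℝ) := by
      have hb := Bc_ge r ε δ hG
      rw [div_le_iff₀ (heps1 r ε δ hG)] at hb
      linarith
    have h5 : 2 * (1 + ε) < 4 := by nlinarith [hG.he1]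
    have h6 : (1 - ε) * (Bc ε : ℝ) ≤ (1 - ε) * ((Bc ε : ℝ) ^ (i' - i)) ^ r :=
      mul_le_mul_of_nonneg_left h1 (le_of_lt (heps1 r ε δ hG))
    calc 2 * (1 + ε) * v ^ r < 4 * v ^ r := by
          exact mul_lt_mul_of_pos_right h5 hvr
      _ ≤ ((1 - ε) * (Bc ε : ℝ)) * v ^ r := mul_le_mul_of_nonneg_right h4 (le_of_lt hvr)
      _ ≤ ((1 - ε) * ((Bc ε : ℝ) ^ (i' - i)) ^ r) * v ^ r :=
          mul_le_mul_of_nonneg_right h6 (le_of_lt hvr)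
      _ = (1 - ε) * (((Bc ε : ℝ) ^ (i' - i)) ^ r * v ^ r) := by ring
  rw [Set.disjoint_left]
  intro x hx1 hx2
  rcases hx1 with ⟨_, hxu⟩
  rcases hx2 with ⟨hxl, _⟩
  linarith

end Facts
end Construction
end MMI
namespace MMI
section Construction2

variable (r : ℕ) (ε δ : ℝ) (est : (n : ℕ) → (Fin n → ℕ) → ℝ)

/-- The reference pmf supported on `{0, ..., t}`, with the masses of the symbols
`1, ..., t` prescribed and all remaining mass on `0`. -/
def Qfun (pa : ℕ → ℝ) (t : ℕ) : ℕ → ℝ≥0∞ :=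
  fun v => Nat.casesOn v (1 - ∑ j ∈ Finset.range t, ENNReal.ofReal (pa j))
    (fun w => if w < t then ENNReal.ofReal (pa w) else 0)

lemma Qfun_sum (pa : ℕ → ℝ) (t : ℕ)
    (h : ∑ j ∈ Finset.range t, ENNReal.ofReal (pa j) ≤ 1) :
    ∑' v, Qfun pa t v = 1 := by
  rw [tsum_eq_zero_add' ENNReal.summable]
  have h2 : ∑' (w : ℕ), Qfun pa t (w + 1) = ∑ j ∈ Finset.range t, ENNReal.ofReal (pa j) := by
    have h0 : ∀ w ∉ Finset.range t, Qfun pa t (w + 1) = 0 := by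
      intro w hw
      simp only [Finset.mem_range, not_lt] at hw
      simp [Qfun, Nat.not_lt.mpr hw]
    rw [tsum_eq_sum h0]
    apply Finset.sum_congr rfl
    intro j hj
    simp only [Finset.mem_range] at hj
    simp [Qfun, hj]
  rw [h2]
  show (1 - ∑ j ∈ Finset.range t, ENNReal.ofReal (pa j)) + _ = 1
  exact tsub_add_cancel_of_le h

def Qpmf (pa : ℕ → ℝ) (t : ℕ) : PMF ℕ :=
  if h : ∑ j ∈ Finset.range t, ENNReal.ofReal (pa j) ≤ 1 then
    show PMF ℕ from ⟨Qfun pa t, (Qfun_sum pa t h) ▸ ENNReal.summable.hasSum⟩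
  else PMF.pure 0

lemma Qpmf_apply (pa : ℕ → ℝ) (t : ℕ)
    (h : ∑ j ∈ Finset.range t, ENNReal.ofReal (pa j) ≤ 1) (v : ℕ) :
    Qpmf pa t v = Qfun pa t v := by
  rw [Qpmf, dif_pos h]; rfl

/-- Property of a suitable sample size at stage `t`. -/
def Nprop (pa : ℕ → ℝ) (N t n : ℕ) : Prop :=
  N < n ∧ t ≤ n ∧
  ((0 < δ ∧ ∀ j, j < t → 0 < pa j ∧ pa j ≤ 1/2) →
    (∑ j ∈ Finset.range t, (1 - pa j) ^ n) + (1/2 : ℝ) ^ n ≤ δ)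

lemma Nprop_exists (pa : ℕ → ℝ) (N t : ℕ) : ∃ n, Nprop δ pa N t n := by
  by_cases hg : 0 < δ ∧ ∀ j, j < t → 0 < pa j ∧ pa j ≤ 1/2
  · obtain ⟨hδ, hpa⟩ := hg
    have h1 : Filter.Tendsto
        (fun n : ℕ => (∑ j ∈ Finset.range t, (1 - pa j) ^ n) + (1/2 : ℝ) ^ n)
        Filter.atTop (nhds 0) := by
      have hs : Filter.Tendsto (fun n : ℕ => ∑ j ∈ Finset.range t, (1 - pa j) ^ n)
          Filter.atTop (nhds 0) := by
        have := tendsto_finset_sum (Finset.range t)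
          (fun j (hj : j ∈ Finset.range t) => by
            have hj' := hpa j (Finset.mem_range.mp hj)
            exact tendsto_pow_atTop_nhds_zero_of_lt_one (r := 1 - pa j)
              (by linarith [hj'.2]) (by linarith [hj'.1]))
        simpa using this
      have hh : Filter.Tendsto (fun n : ℕ => (1/2 : ℝ) ^ n) Filter.atTop (nhds 0) :=
        tendsto_pow_atTop_nhds_zero_of_lt_one (by norm_num) (by norm_num)
      simpa using hs.add hh
    have h2 := h1.eventually_lt_const hδ
    have h3 : ∀ᶠ n : ℕ in Filter.atTop, N < n ∧ t ≤ n :=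
      (Filter.eventually_gt_atTop N).and (Filter.eventually_ge_atTop t)
    obtain ⟨n, hn1, hn2⟩ := (h3.and h2).exists
    exact ⟨n, hn1.1, hn1.2, fun _ => le_of_lt hn2⟩
  · exact ⟨max (N + 1) t, by omega, le_max_right _ _, fun hg' => absurd hg' hg⟩

/-- The candidate events for the estimator's value at stage `t`. -/
def Eev (n : ℕ) (v : ℝ) : Set (Fin n → ℕ) := {ω | est n ω ∈ Jset r ε v}

/-- Property of a suitable diagonalization exponent at stage `t`. -/
def Bprop (Q : PMF ℕ) (n : ℕ) (g : ℝ) (i : ℕ) : Prop :=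
  1 ≤ i ∧ i ≤ Mc δ ∧ (Good r ε δ → 0 < g →
    sampleMeasure Q n (Eev r ε est n ((Bc ε : ℝ) ^ i * g)) ≤ ENNReal.ofReal δ)

lemma Bprop_exists (Q : PMF ℕ) (n : ℕ) (g : ℝ) : ∃ i, Bprop r ε δ est Q n g i := by
  by_cases hg : Good r ε δ ∧ 0 < g
  · obtain ⟨hG, hgpos⟩ := hg
    set M := Mc δ with hM
    have hM1 : 1 ≤ M := Mc_pos δ
    have hdisj : ∀ i ∈ Finset.Icc 1 M, ∀ i' ∈ Finset.Icc 1 M, i ≠ i' →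
        Disjoint (Eev r ε est n ((Bc ε : ℝ) ^ i * g)) (Eev r ε est n ((Bc ε : ℝ) ^ i' * g)) := by
      intro i hi i' hi' hne
      simp only [Finset.mem_Icc] at hi hi'
      rcases lt_or_gt_of_ne hne with hlt | hgt
      · exact Set.disjoint_left.mpr fun ω h1 h2 =>
          (Jset_disjoint r ε δ hG hgpos hi.1 hlt).le_bot ⟨h1, h2⟩
      · exact Set.disjoint_left.mpr fun ω h1 h2 =>
          (Jset_disjoint r ε δ hG hgpos hi'.1 hgt).le_bot ⟨h2, h1⟩
    have hsum : ∑ i ∈ Finset.Icc 1 M, sampleMeasure Q n (Eev r ε est n ((Bc ε : ℝ) ^ i * g)) ≤ 1 := by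
      rw [← measure_biUnion_finset ?_ (fun _ _ => measSet _)]
      · exact prob_le_one
      · intro i hi i' hi' hne
        exact hdisj i hi i' hi' hne
    have hcard : (Finset.Icc 1 M).card = M := by
      rw [Nat.card_Icc]; omega
    have hsum2 : ∑ i ∈ Finset.Icc 1 M, sampleMeasure Q n (Eev r ε est n ((Bc ε : ℝ) ^ i * g)) ≤
        ∑ _i ∈ Finset.Icc 1 M, (M : ℝ≥0∞)⁻¹ := by
      rw [Finset.sum_const, hcard, nsmul_eq_mul, ENNReal.mul_inv_cancel]
      · exact hsum
      · exact Nat.cast_ne_zero.mpr (by omega)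
      · exact ENNReal.natCast_ne_top M
    obtain ⟨i, hi, hile⟩ := ENNReal.exists_le_of_sum_le ⟨1, Finset.mem_Icc.mpr ⟨le_refl 1, hM1⟩⟩ hsum2
    simp only [Finset.mem_Icc] at hi
    refine ⟨i, hi.1, hi.2, fun _ _ => le_trans hile ?_⟩
    -- (M : ℝ≥0∞)⁻¹ ≤ ofReal δ
    have hMδ : 1 / δ ≤ (M : ℝ) := Mc_ge δ
    have hδ0 : 0 < δ := hG.hd0
    have : (M : ℝ≥0∞)⁻¹ ≤ (ENNReal.ofReal (1/δ))⁻¹ := by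
      apply ENNReal.inv_le_inv.mpr
      rw [show (M : ℝ≥0∞) = ENNReal.ofReal (M : ℝ) by simp]
      exact ENNReal.ofReal_le_ofReal hMδ
    refine le_trans this ?_
    rw [one_div, ENNReal.ofReal_inv_of_pos hδ0, inv_inv]
  · refine ⟨1, le_refl 1, Mc_pos δ, fun hGood hgpos => absurd ⟨hGood, hgpos⟩ hg⟩

structure StageData where
  n : ℕ
  g : ℝ
  b : ℕ

instance : Inhabited StageData := ⟨⟨0, 0, 0⟩⟩

def paOf (hist : ℕ → StageData) (j : ℕ) : ℝ := ((hist j).b : ℝ) * (hist j).g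

def prevN (hist : ℕ → StageData) (t : ℕ) : ℕ := (Finset.range t).sup fun j => (hist j).n

def chN (t : ℕ) (hist : ℕ → StageData) : ℕ :=
  Classical.choose (Nprop_exists δ (paOf hist) (prevN hist t) t)

def chG (t : ℕ) (hist : ℕ → StageData) : ℝ :=
  min (sg ε δ * (if t = 0 then 1/2 else (hist (t - 1)).g))
    (δ / (2 * BM ε δ * (chN δ t hist + 1)))

def chI (t : ℕ) (hist : ℕ → StageData) : ℕ :=
  Classical.choose (Bprop_exists r ε δ est (Qpmf (paOf hist) t) (chN δ t hist) (chG ε δ t hist))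

def mkStage (t : ℕ) (hist : ℕ → StageData) : StageData :=
  ⟨chN δ t hist, chG ε δ t hist, Bc ε ^ chI r ε δ est t hist⟩

def histf : ℕ → ℕ → StageData
  | 0 => fun _ => default
  | Nat.succ t => fun j => if j = t then mkStage r ε δ est t (histf t) else histf t j

def D (t : ℕ) : StageData := mkStage r ε δ est t (histf r ε δ est t)

lemma histf_lt : ∀ t j, j < t → histf r ε δ est t j = D r ε δ est j := by
  intro t
  induction t with
  | zero => intro j hj; omega
  | succ t ih =>
    intro j hj
    by_cases hjt : j = t
    · subst hjt; simp [histf, D]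
    · have : j < t := by omega
      simp only [histf, if_neg hjt]
      exact ih j this

def nD (t : ℕ) : ℕ := (D r ε δ est t).n
def gD (t : ℕ) : ℝ := (D r ε δ est t).g
def bD (t : ℕ) : ℕ := (D r ε δ est t).b
def aD (t : ℕ) : ℝ := ((bD r ε δ est t : ℝ)) * gD r ε δ est t

lemma paOf_histf (t j : ℕ) (h : j < t) : paOf (histf r ε δ est t) j = aD r ε δ est j := by
  rw [paOf, histf_lt r ε δ est t j h]; rfl

lemma nD_spec (t : ℕ) :
    Nprop δ (paOf (histf r ε δ est t)) (prevN (histf r ε δ est t) t) t (nD r ε δ est t) :=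
  Classical.choose_spec (Nprop_exists δ (paOf (histf r ε δ est t)) (prevN (histf r ε δ est t) t) t)

lemma gD_def (t : ℕ) :
    gD r ε δ est t = min (sg ε δ * (if t = 0 then 1/2 else (histf r ε δ est t (t - 1)).g))
      (δ / (2 * BM ε δ * (nD r ε δ est t + 1))) := rfl

lemma bD_spec (t : ℕ) :
    Bprop r ε δ est (Qpmf (paOf (histf r ε δ est t)) t) (nD r ε δ est t) (gD r ε δ est t)
      (chI r ε δ est t (histf r ε δ est t)) :=
  Classical.choose_spec (Bprop_exists r ε δ est _ _ _)

lemma bD_def (t : ℕ) : bD r ε δ est t = Bc ε ^ chI r ε δ est t (histf r ε δ est t) := rfl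

lemma bD_spec' (t : ℕ) : ∃ i, 1 ≤ i ∧ i ≤ Mc δ ∧ bD r ε δ est t = Bc ε ^ i :=
  ⟨chI r ε δ est t (histf r ε δ est t), (bD_spec r ε δ est t).1,
    (bD_spec r ε δ est t).2.1, bD_def r ε δ est t⟩

lemma Qpmf_congr {pa pa' : ℕ → ℝ} {t : ℕ} (h : ∀ j, j < t → pa j = pa' j) :
    Qpmf pa t = Qpmf pa' t := by
  have hsum : ∑ j ∈ Finset.range t, ENNReal.ofReal (pa j)
      = ∑ j ∈ Finset.range t, ENNReal.ofReal (pa' j) :=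
    Finset.sum_congr rfl fun j hj => by rw [h j (Finset.mem_range.mp hj)]
  have hfun : Qfun pa t = Qfun pa' t := by
    funext v
    cases v with
    | zero =>
      show (1 - ∑ j ∈ Finset.range t, ENNReal.ofReal (pa j))
        = (1 - ∑ j ∈ Finset.range t, ENNReal.ofReal (pa' j))
      rw [hsum]
    | succ w =>
      by_cases hw : w < t
      · simp [Qfun, hw, h w hw]
      · simp [Qfun, hw]
  unfold Qpmf
  by_cases h1 : ∑ j ∈ Finset.range t, ENNReal.ofReal (pa j) ≤ 1
  · have h2 : ∑ j ∈ Finset.range t, ENNReal.ofReal (pa' j) ≤ 1 := hsum ▸ h1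
    rw [dif_pos h1, dif_pos h2]
    exact PMF.ext fun v => congrFun hfun v
  · have h2 : ¬ ∑ j ∈ Finset.range t, ENNReal.ofReal (pa' j) ≤ 1 := hsum ▸ h1
    rw [dif_neg h1, dif_neg h2]

attribute [irreducible] mkStage histf D chN chG chI Qpmf

end Construction2
end MMI
namespace MMI
section Invariants

variable (r : ℕ) (ε δ : ℝ) (est : (n : ℕ) → (Fin n → ℕ) → ℝ)

lemma gD_zero_eq : gD r ε δ est 0 =
    min (sg ε δ * (1/2)) (δ / (2 * BM ε δ * (nD r ε δ est 0 + 1))) := by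
  rw [gD_def]; norm_num

lemma gD_succ_eq (t : ℕ) : gD r ε δ est (t + 1) =
    min (sg ε δ * gD r ε δ est t) (δ / (2 * BM ε δ * (nD r ε δ est (t + 1) + 1))) := by
  rw [gD_def]
  have h1 : (t + 1 : ℕ) - 1 = t := by omega
  rw [if_neg (Nat.succ_ne_zero t), h1, histf_lt r ε δ est (t + 1) t (by omega)]
  rfl

variable (hG : Good r ε δ)
include hG

lemma gD_pos : ∀ t, 0 < gD r ε δ est t := by
  have hBM := BM_pos r ε δ hG
  have hsg := sg_pos r ε δ hG
  have hδ := hG.hd0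
  intro t
  induction t with
  | zero =>
    rw [gD_zero_eq]
    apply lt_min (by positivity) (by positivity)
  | succ t ih =>
    rw [gD_succ_eq]
    apply lt_min (by positivity) (by positivity)

lemma gD_le_delta (t : ℕ) : gD r ε δ est t ≤ δ / (2 * BM ε δ * (nD r ε δ est t + 1)) := by
  cases t with
  | zero => rw [gD_zero_eq]; exact min_le_right _ _
  | succ t => rw [gD_succ_eq]; exact min_le_right _ _

lemma gD_succ_le (t : ℕ) : gD r ε δ est (t + 1) ≤ sg ε δ * gD r ε δ est t := by
  rw [gD_succ_eq]; exact min_le_left _ _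

lemma gD_quarter : ∀ t, gD r ε δ est t ≤ 1 / (4 * BM ε δ) := by
  have hBM := BM_pos r ε δ hG
  have hBM1 := BM_ge_one r ε δ hG
  intro t
  induction t with
  | zero =>
    rw [gD_zero_eq]
    refine le_trans (min_le_left _ _) ?_
    rw [sg]
    rw [div_mul_eq_mul_div, one_mul, div_le_div_iff₀ (by positivity) (by positivity)]
    ring_nf
    nlinarith
  | succ t ih =>
    refine le_trans (gD_succ_le r ε δ est hG t) ?_
    have h2 : gD r ε δ est t ≤ 1/2 := by
      refine le_trans ih ?_
      rw [div_le_div_iff₀ (by positivity) (by norm_num)]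
      nlinarith
    calc sg ε δ * gD r ε δ est t ≤ sg ε δ * (1/2) :=
          mul_le_mul_of_nonneg_left h2 (le_of_lt (sg_pos r ε δ hG))
      _ ≤ 1 / (4 * BM ε δ) := by
          rw [sg, div_mul_eq_mul_div, one_mul, div_le_div_iff₀ (by positivity) (by positivity)]
          nlinarith

lemma gD_half : ∀ t, gD r ε δ est t ≤ 1/2 := by
  intro t
  refine le_trans (gD_quarter r ε δ est hG t) ?_
  have hBM1 := BM_ge_one r ε δ hG
  have hBM := BM_pos r ε δ hG
  rw [div_le_div_iff₀ (by positivity) (by norm_num)]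
  nlinarith

lemma BMg_succ (t : ℕ) : BM ε δ * gD r ε δ est (t + 1) ≤ gD r ε δ est t / 2 := by
  calc BM ε δ * gD r ε δ est (t + 1) ≤ BM ε δ * (sg ε δ * gD r ε δ est t) :=
        mul_le_mul_of_nonneg_left (gD_succ_le r ε δ est hG t) (le_of_lt (BM_pos r ε δ hG))
    _ = (BM ε δ * sg ε δ) * gD r ε δ est t := by ring
    _ = gD r ε δ est t / 2 := by rw [sg_mul_BM r ε δ hG]; ring

lemma bD_bounds (t : ℕ) : (1:ℝ) ≤ (bD r ε δ est t : ℝ) ∧ (bD r ε δ est t : ℝ) ≤ BM ε δ := by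
  obtain ⟨i, hi1, hi2, hieq⟩ := bD_spec' r ε δ est t
  have hB1 : (1:ℝ) ≤ (Bc ε : ℝ) := Bc_ge_one r ε δ hG
  constructor
  · rw [hieq]
    push_cast
    exact one_le_pow₀ hB1
  · rw [hieq]
    push_cast
    exact pow_le_pow_right₀ hB1 hi2

lemma bD_measure (t : ℕ) :
    sampleMeasure (Qpmf (aD r ε δ est) t) (nD r ε δ est t)
      (Eev r ε est (nD r ε δ est t) (aD r ε δ est t)) ≤ ENNReal.ofReal δ := by
  have hspec := (bD_spec r ε δ est t).2.2 hG (gD_pos r ε δ est hG t)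
  have hQ : Qpmf (paOf (histf r ε δ est t)) t = Qpmf (aD r ε δ est) t :=
    Qpmf_congr fun j hj => paOf_histf r ε δ est t j hj
  have hv : ((Bc ε : ℝ)) ^ (chI r ε δ est t (histf r ε δ est t)) * gD r ε δ est t
      = aD r ε δ est t := by
    rw [aD, bD_def]
    push_cast
    ring
  rw [hQ, hv] at hspec
  exact hspec

end Invariants
end MMI
namespace MMI
section Decay

variable (r : ℕ) (ε δ : ℝ) (est : (n : ℕ) → (Fin n → ℕ) → ℝ) (hG : Good r ε δ)
include hG

lemma aD_le_BMg (t : ℕ) : aD r ε δ est t ≤ BM ε δ * gD r ε δ est t := by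
  rw [aD]
  exact mul_le_mul_of_nonneg_right (bD_bounds r ε δ est hG t).2 (le_of_lt (gD_pos r ε δ est hG t))

lemma aD_pos (t : ℕ) : 0 < aD r ε δ est t := by
  rw [aD]
  exact mul_pos (lt_of_lt_of_le one_pos (bD_bounds r ε δ est hG t).1) (gD_pos r ε δ est hG t)

lemma gD_le_aD (t : ℕ) : gD r ε δ est t ≤ aD r ε δ est t := by
  rw [aD]
  nlinarith [(bD_bounds r ε δ est hG t).1, gD_pos r ε δ est hG t]

lemma aD_le_quarter (t : ℕ) : aD r ε δ est t ≤ 1/4 := by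
  refine le_trans (aD_le_BMg r ε δ est hG t) ?_
  have h1 := gD_quarter r ε δ est hG t
  have h2 := BM_pos r ε δ hG
  have h3 : BM ε δ * gD r ε δ est t ≤ BM ε δ * (1 / (4 * BM ε δ)) :=
    mul_le_mul_of_nonneg_left h1 (le_of_lt h2)
  have key : BM ε δ * (1/(4*BM ε δ)) = 1/4 := by field_simp
  exact le_trans h3 (le_of_eq key)

lemma aD_le_half (t : ℕ) : aD r ε δ est t ≤ 1/2 :=
  le_trans (aD_le_quarter r ε δ est hG t) (by norm_num)

lemma BMg_decay (t : ℕ) : ∀ m, BM ε δ * gD r ε δ est (t + m + 1) ≤ (1/2)^(m+1) * gD r ε δ est t := by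
  intro m
  induction m with
  | zero =>
    have h := BMg_succ r ε δ est hG t
    calc BM ε δ * gD r ε δ est (t + 0 + 1) = BM ε δ * gD r ε δ est (t + 1) := by norm_num
      _ ≤ gD r ε δ est t / 2 := h
      _ = (1/2)^(0+1) * gD r ε δ est t := by ring
  | succ m ih =>
    have h1 : BM ε δ * gD r ε δ est (t + m + 2) ≤ gD r ε δ est (t + m + 1) / 2 := by
      have := BMg_succ r ε δ est hG (t + m + 1)
      convert this using 3 <;> omega
    have h2 : gD r ε δ est (t + m + 1) ≤ BM ε δ * gD r ε δ est (t + m + 1) := by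
      nlinarith [BM_ge_one r ε δ hG, gD_pos r ε δ est hG (t + m + 1)]
    have h3 : BM ε δ * gD r ε δ est (t + m + 2) ≤ ((1/2)^(m+1) * gD r ε δ est t) / 2 := by
      linarith
    calc BM ε δ * gD r ε δ est (t + (m+1) + 1) = BM ε δ * gD r ε δ est (t + m + 2) := rfl
      _ ≤ ((1/2)^(m+1) * gD r ε δ est t) / 2 := h3
      _ = (1/2)^(m+2) * gD r ε δ est t := by ring
      _ = (1/2)^(m+1+1) * gD r ε δ est t := by norm_num

lemma aD_decay (t m : ℕ) : aD r ε δ est (t + m + 1) ≤ (1/2)^(m+1) * gD r ε δ est t :=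
  le_trans (aD_le_BMg r ε δ est hG (t + m + 1)) (BMg_decay r ε δ est hG t m)

lemma aD_shift (t m : ℕ) : aD r ε δ est (t + m) ≤ BM ε δ * gD r ε δ est t * (1/2)^m := by
  cases m with
  | zero => simpa using aD_le_BMg r ε δ est hG t
  | succ m =>
    have h1 := gD_pos r ε δ est hG t
    have h2 := BM_ge_one r ε δ hG
    calc aD r ε δ est (t + (m+1)) ≤ (1/2)^(m+1) * gD r ε δ est t := aD_decay r ε δ est hG t m
      _ = 1 * ((1/2)^(m+1) * gD r ε δ est t) := by ring
      _ ≤ BM ε δ * ((1/2)^(m+1) * gD r ε δ est t) :=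
          mul_le_mul_of_nonneg_right h2 (by positivity)
      _ = BM ε δ * gD r ε δ est t * (1/2)^(m+1) := by ring

lemma aD_global (t : ℕ) : aD r ε δ est t ≤ (1/4) * (1/2)^t := by
  have h0 : BM ε δ * gD r ε δ est 0 ≤ 1/4 := by
    have h1 := gD_quarter r ε δ est hG 0
    have h2 := BM_pos r ε δ hG
    have h3 : BM ε δ * gD r ε δ est 0 ≤ BM ε δ * (1 / (4 * BM ε δ)) :=
      mul_le_mul_of_nonneg_left h1 (le_of_lt h2)
    have key : BM ε δ * (1/(4*BM ε δ)) = 1/4 := by field_simp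
    exact le_trans h3 (le_of_eq key)
  have := aD_shift r ε δ est hG 0 t
  simp only [Nat.zero_add] at this
  refine le_trans this ?_
  have h4 : (0:ℝ) ≤ (1/2:ℝ)^t := by positivity
  nlinarith

lemma nD_mono {t j : ℕ} (h : j < t) : nD r ε δ est j < nD r ε δ est t := by
  have h1 := (nD_spec r ε δ est t).1
  have h2 : (histf r ε δ est t j).n ≤ prevN (histf r ε δ est t) t :=
    Finset.le_sup (f := fun j => (histf r ε δ est t j).n) (Finset.mem_range.mpr h)
  rw [histf_lt r ε δ est t j h] at h2
  have : nD r ε δ est j = (D r ε δ est j).n := rfl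
  omega

lemma nD_ge (t : ℕ) : t ≤ nD r ε δ est t := (nD_spec r ε δ est t).2.1

lemma nD_sum (t : ℕ) :
    (∑ j ∈ Finset.range t, (1 - aD r ε δ est j) ^ (nD r ε δ est t)) + (1/2:ℝ) ^ (nD r ε δ est t) ≤ δ := by
  have h := (nD_spec r ε δ est t).2.2
  have hhyp : 0 < δ ∧ ∀ j, j < t → 0 < paOf (histf r ε δ est t) j ∧ paOf (histf r ε δ est t) j ≤ 1/2 := by
    refine ⟨hG.hd0, fun j hj => ?_⟩
    rw [paOf_histf r ε δ est t j hj]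
    exact ⟨aD_pos r ε δ est hG j, aD_le_half r ε δ est hG j⟩
  have h2 := h hhyp
  have h3 : ∑ j ∈ Finset.range t, (1 - paOf (histf r ε δ est t) j) ^ (nD r ε δ est t)
      = ∑ j ∈ Finset.range t, (1 - aD r ε δ est j) ^ (nD r ε δ est t) :=
    Finset.sum_congr rfl fun j hj => by rw [paOf_histf r ε δ est t j (Finset.mem_range.mp hj)]
  rw [h3] at h2
  exact h2

end Decay
end MMI
namespace MMI
section FinalPMF

variable (r : ℕ) (ε δ : ℝ) (est : (n : ℕ) → (Fin n → ℕ) → ℝ)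

def Sa : ℝ≥0∞ := ∑' j, ENNReal.ofReal (aD r ε δ est j)

lemma Sa_le (hG : Good r ε δ) : Sa r ε δ est ≤ ENNReal.ofReal (1/2) := by
  have h1 : ∀ j, ENNReal.ofReal (aD r ε δ est j) ≤ ENNReal.ofReal ((1/4) * (1/2)^j) :=
    fun j => ENNReal.ofReal_le_ofReal (aD_global r ε δ est hG j)
  refine le_trans (ENNReal.tsum_le_tsum h1) ?_
  rw [← ENNReal.ofReal_tsum_of_nonneg (fun j => by positivity)
    ((summable_geometric_of_lt_one (by norm_num) (by norm_num)).mul_left _)]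
  apply ENNReal.ofReal_le_ofReal
  rw [tsum_mul_left, tsum_geometric_of_lt_one (by norm_num) (by norm_num)]
  norm_num

lemma Sa_le_one (hG : Good r ε δ) : Sa r ε δ est ≤ 1 :=
  le_trans (Sa_le r ε δ est hG) (by
    rw [ENNReal.ofReal_le_one]; norm_num)

def pfun : ℕ → ℝ≥0∞ :=
  fun v => Nat.casesOn v (1 - Sa r ε δ est) (fun w => ENNReal.ofReal (aD r ε δ est w))

lemma pfun_sum (h : Sa r ε δ est ≤ 1) : ∑' v, pfun r ε δ est v = 1 := by
  rw [tsum_eq_zero_add' ENNReal.summable]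
  have h2 : ∑' (w : ℕ), pfun r ε δ est (w + 1) = Sa r ε δ est := rfl
  rw [h2]
  exact tsub_add_cancel_of_le h

def Ppmf : PMF ℕ :=
  if h : Sa r ε δ est ≤ 1 then show PMF ℕ from ⟨pfun r ε δ est, (pfun_sum r ε δ est h) ▸ ENNReal.summable.hasSum⟩
  else PMF.pure 0

lemma Ppmf_apply (hG : Good r ε δ) (v : ℕ) : Ppmf r ε δ est v = pfun r ε δ est v := by
  rw [Ppmf, dif_pos (Sa_le_one r ε δ est hG)]; rfl

lemma Ppmf_succ (hG : Good r ε δ) (w : ℕ) :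
    Ppmf r ε δ est (w + 1) = ENNReal.ofReal (aD r ε δ est w) := Ppmf_apply r ε δ est hG (w + 1)

lemma Ppmf_zero (hG : Good r ε δ) : Ppmf r ε δ est 0 = 1 - Sa r ε δ est :=
  Ppmf_apply r ε δ est hG 0

lemma one_sub_Ppmf_zero (hG : Good r ε δ) : 1 - Ppmf r ε δ est 0 = Sa r ε δ est := by
  rw [Ppmf_zero r ε δ est hG]
  exact ENNReal.sub_sub_cancel ENNReal.one_ne_top (Sa_le_one r ε δ est hG)

lemma pReal_succ (hG : Good r ε δ) (w : ℕ) : pReal (Ppmf r ε δ est) (w + 1) = aD r ε δ est w := by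
  rw [pReal, Ppmf_succ r ε δ est hG w, ENNReal.toReal_ofReal (le_of_lt (aD_pos r ε δ est hG w))]

lemma pReal_nonneg (P : PMF ℕ) (j : ℕ) : 0 ≤ pReal P j := ENNReal.toReal_nonneg

lemma summable_pReal (P : PMF ℕ) : Summable (pReal P) := by
  apply ENNReal.summable_toReal
  rw [P.tsum_coe]
  exact ENNReal.one_ne_top

lemma pReal_le_one (P : PMF ℕ) (j : ℕ) : pReal P j ≤ 1 := by
  rw [pReal]
  have h := P.coe_le_one j
  exact ENNReal.toReal_le_of_le_ofReal one_pos.le (by simpa using h)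

lemma P_le_Q (hG : Good r ε δ) (t v : ℕ) (hv : v ≤ t) :
    Ppmf r ε δ est v ≤ Qpmf (aD r ε δ est) t v := by
  have hsum_le : ∑ j ∈ Finset.range t, ENNReal.ofReal (aD r ε δ est j) ≤ 1 :=
    le_trans (ENNReal.sum_le_tsum _) (Sa_le_one r ε δ est hG)
  rw [Ppmf_apply r ε δ est hG, Qpmf_apply _ _ hsum_le]
  cases v with
  | zero =>
    show 1 - Sa r ε δ est ≤ 1 - ∑ j ∈ Finset.range t, ENNReal.ofReal (aD r ε δ est j)
    exact tsub_le_tsub_left (ENNReal.sum_le_tsum _) 1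
  | succ w =>
    show ENNReal.ofReal (aD r ε δ est w) ≤ if w < t then ENNReal.ofReal (aD r ε δ est w) else 0
    rw [if_pos (by omega)]

lemma tail_sum (hG : Good r ε δ) (t : ℕ) :
    ∑' m, ENNReal.ofReal (aD r ε δ est (t + m)) ≤
      ENNReal.ofReal (2 * BM ε δ * gD r ε δ est t) := by
  have h1 : ∀ m, ENNReal.ofReal (aD r ε δ est (t + m)) ≤
      ENNReal.ofReal (BM ε δ * gD r ε δ est t * (1/2)^m) :=
    fun m => ENNReal.ofReal_le_ofReal (aD_shift r ε δ est hG t m)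
  refine le_trans (ENNReal.tsum_le_tsum h1) ?_
  rw [← ENNReal.ofReal_tsum_of_nonneg
    (fun m => by
      have h2 := BM_pos r ε δ hG
      have h3 := gD_pos r ε δ est hG t
      positivity)
    ((summable_geometric_of_lt_one (by norm_num) (by norm_num)).mul_left _)]
  apply ENNReal.ofReal_le_ofReal
  rw [tsum_mul_left, tsum_geometric_of_lt_one (by norm_num) (by norm_num)]
  rw [show (1 - 1/2 : ℝ)⁻¹ = 2 by norm_num]
  ring_nf
  exact le_refl _

attribute [irreducible] Ppmf Sa

end FinalPMF
end MMI
namespace MMI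
section Stage

variable (r : ℕ) (ε δ : ℝ) (est : (n : ℕ) → (Fin n → ℕ) → ℝ)

/-- The good event at stage `t`: all symbols `≤ t` appear, no symbol `> t` appears. -/
def Aset (t : ℕ) : Set (Fin (nD r ε δ est t) → ℕ) :=
  {ω | (∀ j, j ≤ t → ∃ i, ω i = j) ∧ (∀ j, t < j → ∀ i, ω i ≠ j)}

lemma Aset_low {t : ℕ} {ω : Fin (nD r ε δ est t) → ℕ} (hω : ω ∈ Aset r ε δ est t) (i : Fin (nD r ε δ est t)) :
    ω i ≤ t := by
  by_contra hc
  exact hω.2 (ω i) (by omega) i rfl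

variable (hG : Good r ε δ)
include hG

set_option maxHeartbeats 2000000 in
lemma theta_bounds (t : ℕ) (ω : Fin (nD r ε δ est t) → ℕ) (hω : ω ∈ Aset r ε δ est t) :
    (aD r ε δ est t) ^ r ≤ missingMass (pReal (Ppmf r ε δ est)) r ω ∧
      missingMass (pReal (Ppmf r ε δ est)) r ω ≤ 2 * (aD r ε δ est t) ^ r := by
  set p := pReal (Ppmf r ε δ est) with hpdef
  set c := aD r ε δ est t with hcdef
  have hc : 0 < c := aD_pos r ε δ est hG t
  have hp : ∀ w, p (w + 1) = aD r ε δ est w := fun w => pReal_succ r ε δ est hG w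
  have hpn : ∀ j, 0 ≤ p j := fun j => pReal_nonneg _ j
  have hind : ∀ j, (if freq ω j = 0 then (1:ℝ) else 0) = if t + 1 ≤ j then 1 else 0 := by
    intro j
    rcases le_or_gt j t with hj | hj
    · obtain ⟨i, hi⟩ := hω.1 j hj
      have hne : freq ω j ≠ 0 := by
        rw [Ne, freq_eq_zero_iff]; push_neg; exact ⟨i, hi⟩
      rw [if_neg hne, if_neg (by omega)]
    · have hz : freq ω j = 0 := (freq_eq_zero_iff ω j).mpr (hω.2 j hj)
      rw [if_pos hz, if_pos (by omega)]
  have hF : missingMass p r ω = ∑' j, (if t + 1 ≤ j then p j ^ r else 0) := by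
    rw [missingMass]
    apply tsum_congr
    intro j
    rw [hind j]
    by_cases hj : t + 1 ≤ j <;> simp [hj]
  have hkey : ∀ m : ℕ, p (t + 1 + m) ^ r ≤ c ^ r * (1/2) ^ m := by
    intro m
    cases m with
    | zero =>
      have h0 : t + 1 + 0 = t + 1 := rfl
      rw [h0, hp t, ← hcdef, pow_zero, mul_one]
    | succ m' =>
      have he : p (t + 1 + (m' + 1)) = aD r ε δ est (t + m' + 1) := by
        rw [show t + 1 + (m' + 1) = (t + m' + 1) + 1 by omega, hp]
      have h1 : aD r ε δ est (t + m' + 1) ≤ (1/2) ^ (m' + 1) * gD r ε δ est t :=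
        aD_decay r ε δ est hG t m'
      have h2 : (1/2:ℝ) ^ (m' + 1) * gD r ε δ est t ≤ (1/2) ^ (m' + 1) * c :=
        mul_le_mul_of_nonneg_left (gD_le_aD r ε δ est hG t) (by positivity)
      have h3 : p (t + 1 + (m' + 1)) ^ r ≤ ((1/2:ℝ) ^ (m' + 1) * c) ^ r := by
        apply pow_le_pow_left₀ (hpn _)
        rw [he]; linarith
      refine le_trans h3 ?_
      rw [mul_pow]
      have h4 : ((1/2:ℝ) ^ (m' + 1)) ^ r ≤ (1/2) ^ (m' + 1) :=
        pow_le_of_le_one (by positivity) (pow_le_one₀ (by norm_num) (by norm_num)) (by have := hG.hr; omega)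
      calc ((1/2:ℝ) ^ (m' + 1)) ^ r * c ^ r ≤ (1/2) ^ (m' + 1) * c ^ r :=
            mul_le_mul_of_nonneg_right h4 (by positivity)
        _ = c ^ r * (1/2) ^ (m' + 1) := by ring
  have hFH : ∀ j, (if t + 1 ≤ j then p j ^ r else 0) ≤
      (if t + 1 ≤ j then c ^ r * (1/2) ^ (j - (t+1)) else 0) := by
    intro j
    by_cases hj : t + 1 ≤ j
    · rw [if_pos hj, if_pos hj]
      have : j = t + 1 + (j - (t + 1)) := by omega
      calc p j ^ r = p (t + 1 + (j - (t+1))) ^ r := by rw [← this]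
        _ ≤ c ^ r * (1/2) ^ (j - (t+1)) := hkey _
    · rw [if_neg hj, if_neg hj]
  have SHf : Summable (fun j => if t + 1 ≤ j then c ^ r * (1/2:ℝ) ^ (j - (t+1)) else 0) :=
    summable_shift (t+1) ((summable_geometric_of_lt_one (by norm_num) (by norm_num)).mul_left _)
  have SF : Summable (fun j => if t + 1 ≤ j then p j ^ r else 0) := by
    apply Summable.of_nonneg_of_le ?_ hFH SHf
    intro j
    by_cases hj : t + 1 ≤ j
    · rw [if_pos hj]; exact pow_nonneg (hpn j) r
    · rw [if_neg hj]
  constructor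
  · rw [hF]
    have hterm : (if t + 1 ≤ t + 1 then p (t+1) ^ r else 0) = c ^ r := by
      rw [if_pos (le_refl _), hp t]
    rw [← hterm]
    apply Summable.le_tsum SF
    intro j hj
    by_cases hjt : t + 1 ≤ j
    · rw [if_pos hjt]; exact pow_nonneg (hpn j) r
    · rw [if_neg hjt]
  · rw [hF]
    have hsum : ∑' j, (if t + 1 ≤ j then c ^ r * (1/2:ℝ) ^ (j - (t+1)) else 0) = 2 * c ^ r := by
      rw [tsum_shift (fun m => c ^ r * (1/2:ℝ) ^ m) (t+1), tsum_mul_left,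
        tsum_geometric_of_lt_one (by norm_num) (by norm_num)]
      norm_num; ring
    rw [← hsum]
    exact Summable.tsum_le_tsum hFH SF SHf

end Stage
end MMI
namespace MMI
section StageBounds

variable (r : ℕ) (ε δ : ℝ) (est : (n : ℕ) → (Fin n → ℕ) → ℝ) (hG : Good r ε δ)
include hG

lemma unseen_bound (t : ℕ) :
    sampleMeasure (Ppmf r ε δ est) (nD r ε δ est t)
      {ω | ∃ j, j ≤ t ∧ ∀ i, ω i ≠ j} ≤ ENNReal.ofReal δ := by
  set P := Ppmf r ε δ est with hP
  set n := nD r ε δ est t with hn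
  have hsub : {ω : Fin n → ℕ | ∃ j, j ≤ t ∧ ∀ i, ω i ≠ j} ⊆
      ⋃ j, (if j ≤ t then {ω : Fin n → ℕ | ∀ i, ω i ≠ j} else ∅) := by
    rintro ω ⟨j, hj, hne⟩
    exact Set.mem_iUnion.mpr ⟨j, by rw [if_pos hj]; exact hne⟩
  refine le_trans (measure_mono hsub) (le_trans (measure_iUnion_le _) ?_)
  have hCj : ∀ j, sampleMeasure P n (if j ≤ t then {ω : Fin n → ℕ | ∀ i, ω i ≠ j} else ∅)
      = if j ≤ t then (1 - P j) ^ n else 0 := by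
    intro j
    by_cases hj : j ≤ t
    · rw [if_pos hj, if_pos hj, measure_unseen]
    · rw [if_neg hj, if_neg hj, measure_empty]
  rw [tsum_congr hCj]
  rw [tsum_eq_sum (s := Finset.range (t+1))
    (fun j hj => by rw [if_neg (by simpa [Nat.lt_succ_iff] using hj)])]
  rw [Finset.sum_range_succ']
  have h0 : (if (0:ℕ) ≤ t then (1 - P 0) ^ n else 0) ≤ ENNReal.ofReal ((1/2)^n) := by
    rw [if_pos (Nat.zero_le t), one_sub_Ppmf_zero r ε δ est hG, ENNReal.ofReal_pow (by norm_num : (0:ℝ) ≤ 1/2)]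
    exact pow_le_pow_left' (Sa_le r ε δ est hG) n
  have hsucc : ∀ j ∈ Finset.range t,
      (if j + 1 ≤ t then (1 - P (j+1)) ^ n else 0) = ENNReal.ofReal ((1 - aD r ε δ est j)^n) := by
    intro j hj
    have hjt : j + 1 ≤ t := Finset.mem_range.mp hj
    rw [if_pos hjt, Ppmf_succ r ε δ est hG j]
    have h1 : (1:ℝ≥0∞) - ENNReal.ofReal (aD r ε δ est j) = ENNReal.ofReal (1 - aD r ε δ est j) := by
      rw [ENNReal.ofReal_sub _ (le_of_lt (aD_pos r ε δ est hG j)), ENNReal.ofReal_one]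
    rw [h1, ENNReal.ofReal_pow (by linarith [aD_le_half r ε δ est hG j] : (0:ℝ) ≤ 1 - aD r ε δ est j)]
  rw [Finset.sum_congr rfl hsucc]
  have hsum : ∑ j ∈ Finset.range t, ENNReal.ofReal ((1 - aD r ε δ est j)^n)
      = ENNReal.ofReal (∑ j ∈ Finset.range t, (1 - aD r ε δ est j)^n) := by
    rw [ENNReal.ofReal_sum_of_nonneg]
    intro j hj
    exact pow_nonneg (by linarith [aD_le_half r ε δ est hG j]) n
  rw [hsum]
  refine le_trans (add_le_add (le_refl _) h0) ?_
  rw [← ENNReal.ofReal_add (Finset.sum_nonneg fun j hj =>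
    pow_nonneg (by linarith [aD_le_half r ε δ est hG j]) n) (by positivity)]
  exact ENNReal.ofReal_le_ofReal (nD_sum r ε δ est hG t)

lemma seen_bound (t : ℕ) :
    sampleMeasure (Ppmf r ε δ est) (nD r ε δ est t)
      {ω | ∃ j, t < j ∧ ∃ i, ω i = j} ≤ ENNReal.ofReal δ := by
  set P := Ppmf r ε δ est with hP
  set n := nD r ε δ est t with hn
  have hsub : {ω : Fin n → ℕ | ∃ j, t < j ∧ ∃ i, ω i = j} ⊆
      ⋃ j, (if t < j then {ω : Fin n → ℕ | ∃ i, ω i = j} else ∅) := by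
    rintro ω ⟨j, hj, hex⟩
    exact Set.mem_iUnion.mpr ⟨j, by rw [if_pos hj]; exact hex⟩
  refine le_trans (measure_mono hsub) (le_trans (measure_iUnion_le _) ?_)
  have hCj : ∀ j, sampleMeasure P n (if t < j then {ω : Fin n → ℕ | ∃ i, ω i = j} else ∅)
      ≤ if t + 1 ≤ j then (n : ℝ≥0∞) * ENNReal.ofReal (aD r ε δ est (t + (j - (t+1)))) else 0 := by
    intro j
    by_cases hj : t < j
    · rw [if_pos hj, if_pos (by omega)]
      refine le_trans (measure_seen_le P n j) ?_
      have hPj : P j = ENNReal.ofReal (aD r ε δ est (t + (j - (t+1)))) := by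
        have hj1 : j = (t + (j - (t+1))) + 1 := by omega
        conv_lhs => rw [hj1]
        exact Ppmf_succ r ε δ est hG _
      rw [hPj]
    · rw [if_neg hj, if_neg (by omega), measure_empty]
  refine le_trans (ENNReal.tsum_le_tsum hCj) ?_
  rw [tsum_shift' (fun m => (n : ℝ≥0∞) * ENNReal.ofReal (aD r ε δ est (t + m))) (t+1)]
  rw [ENNReal.tsum_mul_left]
  refine le_trans (mul_le_mul_right (tail_sum r ε δ est hG t) _) ?_
  rw [show ((n:ℕ) : ℝ≥0∞) = ENNReal.ofReal (n:ℝ) by simp]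
  rw [← ENNReal.ofReal_mul (by positivity)]
  apply ENNReal.ofReal_le_ofReal
  -- real arithmetic: n * (2 BM gD t) ≤ δ
  have hg := gD_le_delta r ε δ est hG t
  have hBM := BM_pos r ε δ hG
  have hgpos := gD_pos r ε δ est hG t
  have h1 : gD r ε δ est t * (2 * BM ε δ * ((n:ℝ) + 1)) ≤ δ := by
    rw [le_div_iff₀ (by positivity)] at hg
    exact hg
  nlinarith [mul_nonneg (mul_nonneg (le_of_lt hBM) (le_of_lt hgpos)) (Nat.cast_nonneg (α := ℝ) n)]

lemma Aset_compl_bound (t : ℕ) :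
    sampleMeasure (Ppmf r ε δ est) (nD r ε δ est t) (Aset r ε δ est t)ᶜ ≤
      ENNReal.ofReal δ + ENNReal.ofReal δ := by
  have hsub : (Aset r ε δ est t)ᶜ ⊆
      {ω | ∃ j, j ≤ t ∧ ∀ i, ω i ≠ j} ∪ {ω | ∃ j, t < j ∧ ∃ i, ω i = j} := by
    intro ω hω
    rw [Set.mem_compl_iff, Aset, Set.mem_setOf_eq, not_and_or] at hω
    rcases hω with h1 | h2
    · push_neg at h1
      obtain ⟨j, hj, hne⟩ := h1
      exact Or.inl ⟨j, hj, hne⟩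
    · push_neg at h2
      obtain ⟨j, hj, i, hi⟩ := h2
      exact Or.inr ⟨j, hj, i, hi⟩
  refine le_trans (measure_mono hsub) (le_trans (measure_union_le _ _) ?_)
  exact add_le_add (unseen_bound r ε δ est hG t) (seen_bound r ε δ est hG t)

lemma compare_bound (t : ℕ) :
    sampleMeasure (Ppmf r ε δ est) (nD r ε δ est t)
      (Eev r ε est (nD r ε δ est t) (aD r ε δ est t) ∩ Aset r ε δ est t) ≤
      ENNReal.ofReal δ := by
  refine le_trans (sample_mono_pmf (Q := Qpmf (aD r ε δ est) t) ?_) ?_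
  · intro ω hω i
    exact P_le_Q r ε δ est hG t (ω i) (Aset_low r ε δ est hω.2 i)
  · refine le_trans (measure_mono Set.inter_subset_left) ?_
    exact bD_measure r ε δ est hG t

lemma stage_bound (hfun : ℝ → ℝ) (t : ℕ) :
    1 ≤ sampleMeasure (Ppmf r ε δ est) (nD r ε δ est t)
      {ω | mloss hfun (est (nD r ε δ est t) ω) (missingMass (pReal (Ppmf r ε δ est)) r ω) > ε}
      + ENNReal.ofReal (3 * δ) := by
  set P := Ppmf r ε δ est with hP
  set n := nD r ε δ est t with hn
  set A := Aset r ε δ est t with hA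
  set E := Eev r ε est n (aD r ε δ est t) with hE
  set Fail := {ω : Fin n → ℕ |
    mloss hfun (est n ω) (missingMass (pReal P) r ω) > ε} with hFail
  have hsub : A \ E ⊆ Fail := by
    intro ω hω
    rw [hFail, Set.mem_setOf_eq]
    by_contra hc
    push_neg at hc
    obtain ⟨hlow, hup⟩ := theta_bounds r ε δ est hG t ω hω.1
    set θ := missingMass (pReal P) r ω with hθ
    have hc0 : 0 < aD r ε δ est t := aD_pos r ε δ est hG t
    have hθ0 : 0 < θ := lt_of_lt_of_le (by positivity) hlow
    rw [mloss, if_pos hθ0, abs_le] at hc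
    have hub : est n ω ≤ (1 + ε) * θ := by
      have h2 := hc.2
      have h3 : est n ω / θ ≤ 1 + ε := by linarith
      rw [div_le_iff₀ hθ0] at h3
      linarith [h3]
    have hlb : (1 - ε) * θ ≤ est n ω := by
      have h1 := hc.1
      have h3 : 1 - ε ≤ est n ω / θ := by linarith
      rw [le_div_iff₀ hθ0] at h3
      linarith [h3]
    have he0 : (0:ℝ) ≤ 1 - ε := by linarith [hG.he1]
    have he2 : (0:ℝ) ≤ 1 + ε := by linarith [hG.he0]
    have hmem : ω ∈ E := by
      rw [hE, Eev, Set.mem_setOf_eq, Jset, Set.mem_Icc]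
      constructor
      · calc (1 - ε) * aD r ε δ est t ^ r ≤ (1 - ε) * θ :=
            mul_le_mul_of_nonneg_left hlow he0
          _ ≤ est n ω := hlb
      · calc est n ω ≤ (1 + ε) * θ := hub
          _ ≤ (1 + ε) * (2 * aD r ε δ est t ^ r) := mul_le_mul_of_nonneg_left hup he2
          _ = 2 * (1 + ε) * aD r ε δ est t ^ r := by ring
    exact hω.2 hmem
  have hδ0 : (0:ℝ) ≤ δ := le_of_lt hG.hd0
  calc (1:ℝ≥0∞) = sampleMeasure P n Set.univ := measure_univ.symm
    _ = sampleMeasure P n (A ∪ Aᶜ) := by rw [Set.union_compl_self]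
    _ ≤ sampleMeasure P n A + sampleMeasure P n Aᶜ := measure_union_le _ _
    _ ≤ sampleMeasure P n A + (ENNReal.ofReal δ + ENNReal.ofReal δ) :=
        add_le_add_right (Aset_compl_bound r ε δ est hG t) _
    _ ≤ (sampleMeasure P n (A \ E) + sampleMeasure P n (A ∩ E))
        + (ENNReal.ofReal δ + ENNReal.ofReal δ) := by
        refine add_le_add_left ?_ _
        calc sampleMeasure P n A = sampleMeasure P n ((A \ E) ∪ (A ∩ E)) := by
              rw [Set.diff_union_inter]
          _ ≤ _ := measure_union_le _ _
    _ ≤ (sampleMeasure P n Fail + ENNReal.ofReal δ)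
        + (ENNReal.ofReal δ + ENNReal.ofReal δ) := by
        refine add_le_add_left (add_le_add (measure_mono hsub) ?_) _
        rw [Set.inter_comm]
        exact compare_bound r ε δ est hG t
    _ = sampleMeasure P n Fail + ENNReal.ofReal (3 * δ) := by
        rw [show (3:ℝ) * δ = δ + (δ + δ) by ring, ENNReal.ofReal_add hδ0 (by positivity),
          ENNReal.ofReal_add hδ0 hδ0]
        ring

end StageBounds
end MMI

/-- Impossibility of weak consistency: for every sequence of estimators of the `r`-order
missing mass, the worst case (over all discrete distributions) of the limsup of the
probability of a relative error larger than `ε` equals one. -/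
theorem missingMass_weak_consistency_impossible (r : ℕ) (hr : 1 ≤ r)
    (ε : ℝ) (hε : ε ∈ Set.Ioo (0 : ℝ) 1)
    (h : ℝ → ℝ) (hh : Measurable h)
    (est : (n : ℕ) → (Fin n → ℕ) → ℝ) (hest : ∀ n, Measurable (est n)) :
    ⨆ P : PMF ℕ,
      Filter.limsup
        (fun n => sampleMeasure P n
          {ω | mloss h (est n ω) (missingMass (pReal P) r ω) > ε})
        Filter.atTop = 1 := by
  apply le_antisymm
  · apply iSup_le
    intro P
    have hconst : Filter.limsup (fun _ : ℕ => (1 : ℝ≥0∞)) Filter.atTop = 1 :=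
      Filter.limsup_const 1
    refine le_trans (Filter.limsup_le_limsup
      (Filter.Eventually.of_forall fun n => prob_le_one)) (le_of_eq hconst)
  · by_contra hlt
    rw [not_le] at hlt
    set b := ⨆ P : PMF ℕ,
      Filter.limsup
        (fun n => sampleMeasure P n
          {ω | mloss h (est n ω) (missingMass (pReal P) r ω) > ε})
        Filter.atTop with hb
    have hbne : b ≠ ⊤ := (lt_of_lt_of_le hlt le_top).ne
    set β := b.toReal with hβ
    have hβ0 : 0 ≤ β := ENNReal.toReal_nonneg
    have hβ1 : β < 1 := by
      have := ENNReal.toReal_lt_toReal hbne (by simp : (1:ℝ≥0∞) ≠ ⊤)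
      simpa using this.mpr hlt
    set δ := (1 - β) / 6 with hδ
    have hδ0 : 0 < δ := by rw [hδ]; linarith
    have hG : MMI.Good r ε δ := ⟨hδ0, by rw [hδ]; linarith, hε.1, hε.2, hr⟩
    set P := MMI.Ppmf r ε δ est with hP
    have hkey : ∀ t : ℕ, 1 - ENNReal.ofReal (3 * δ) ≤
        sampleMeasure P (MMI.nD r ε δ est t)
          {ω | mloss h (est (MMI.nD r ε δ est t) ω)
            (missingMass (pReal P) r ω) > ε} :=
      fun t => tsub_le_iff_right.mpr (MMI.stage_bound r ε δ est hG h t)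
    have hfreq : ∃ᶠ n in Filter.atTop, 1 - ENNReal.ofReal (3 * δ) ≤
        sampleMeasure P n {ω | mloss h (est n ω) (missingMass (pReal P) r ω) > ε} :=
      Filter.frequently_atTop.mpr fun N =>
        ⟨MMI.nD r ε δ est N, MMI.nD_ge r ε δ est hG N, hkey N⟩
    have hlim : 1 - ENNReal.ofReal (3 * δ) ≤
        Filter.limsup
          (fun n => sampleMeasure P n
            {ω | mloss h (est n ω) (missingMass (pReal P) r ω) > ε})
          Filter.atTop :=
      Filter.le_limsup_of_frequently_le' hfreq
    have hsup : Filter.limsup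
        (fun n => sampleMeasure P n
          {ω | mloss h (est n ω) (missingMass (pReal P) r ω) > ε})
        Filter.atTop ≤ b := by
      rw [hb]
      exact le_iSup (fun Q : PMF ℕ => Filter.limsup
        (fun n => sampleMeasure Q n
          {ω | mloss h (est n ω) (missingMass (pReal Q) r ω) > ε})
        Filter.atTop) P
    have hcon : (1:ℝ≥0∞) - ENNReal.ofReal (3 * δ) ≤ b := le_trans hlim hsup
    have hEq : (1:ℝ≥0∞) - ENNReal.ofReal (3 * δ) = ENNReal.ofReal (1 - 3 * δ) := by
      rw [ENNReal.ofReal_sub _ (by positivity), ENNReal.ofReal_one]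
    have hbofReal : b = ENNReal.ofReal β := (ENNReal.ofReal_toReal hbne).symm
    rw [hEq, hbofReal] at hcon
    have : (1:ℝ) - 3 * δ ≤ β := by
      have h36 : (0:ℝ) < 1 - 3 * δ := by rw [hδ]; linarith
      exact (ENNReal.ofReal_le_ofReal_iff hβ0).mp hcon
    rw [hδ] at this
    linarith

end
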